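/- Let u, v be unit vectors in ℝ³ and α, β ∈ (0, π/2) such that the angle between u and v equals α + β. If a line segment joins the points u/cos α and v/cos β, then this segment is tangent to the unit sphere, and the point of tangency divides the segment into pieces of lengths tan α and tan β. -/

import Mathlib

open Real
open scoped RealInnerProductSpace

lemma scal_key (ca cb sa sb t : ℝ) (hca : 0 < ca) (hcb : 0 < cb)
    (hsa : 0 < sa) (hsb : 0 < sb) (pa : sa^2 + ca^2 = 1) (pb : sb^2 + cb^2 = 1) :
    ca⁻¹*ca⁻¹ + 2*t*(ca⁻¹*cb⁻¹*(ca*cb - sa*sb) - ca⁻¹*ca⁻¹)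
      + t^2*(ca⁻¹*ca⁻¹ - 2*(ca⁻¹*cb⁻¹*(ca*cb - sa*sb)) + cb⁻¹*cb⁻¹)
    = 1 + (sa/ca + sb/cb)^2 * (t - (sa/ca)/(sa/ca + sb/cb))^2 := by
  have hL : sa/ca + sb/cb > 0 := by positivity
  field_simp
  linear_combination (-cb^2 + 2*t*cb^2 - t^2*cb^2) * pa + (-t^2*ca^2) * pb

lemma scal_len (ca cb sa sb : ℝ) (hca : 0 < ca) (hcb : 0 < cb)
    (hsa : 0 < sa) (hsb : 0 < sb) (pa : sa^2 + ca^2 = 1) (pb : sb^2 + cb^2 = 1) :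
    ca⁻¹*ca⁻¹ - 2*(ca⁻¹*cb⁻¹*(ca*cb - sa*sb)) + cb⁻¹*cb⁻¹ = (sa/ca + sb/cb)^2 := by
  field_simp
  linear_combination (-cb^2) * pa + (-ca^2) * pb

lemma eq_of_sq_eq_sq' (x y : ℝ) (hx : 0 ≤ x) (hy : 0 ≤ y) (h : x^2 = y^2) : x = y := by
  nlinarith [sq_nonneg (x - y), sq_nonneg (x + y)]

set_option maxHeartbeats 1000000 in
/-- If `u, v` are unit vectors in `ℝ³` with angle `α + β` between them,
`α, β ∈ (0, π/2)`, then the segment joining `u / cos α` and `v / cos β` is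
tangent to the unit sphere: it touches it at exactly one point, lies outside
the open unit ball, and the tangency point divides the segment into pieces of
lengths `tan α` and `tan β`. -/
theorem segment_tangent_to_sphere (u v : EuclideanSpace ℝ (Fin 3))
    (hu : ‖u‖ = 1) (hv : ‖v‖ = 1) (α β : ℝ)
    (hα : α ∈ Set.Ioo 0 (π / 2)) (hβ : β ∈ Set.Ioo 0 (π / 2))
    (hangle : Real.arccos ⟪u, v⟫ = α + β) :
    ∃ p ∈ segment ℝ ((Real.cos α)⁻¹ • u) ((Real.cos β)⁻¹ • v),
      ‖p‖ = 1 ∧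
      (∀ q ∈ segment ℝ ((Real.cos α)⁻¹ • u) ((Real.cos β)⁻¹ • v),
        1 ≤ ‖q‖ ∧ (‖q‖ = 1 → q = p)) ∧
      dist ((Real.cos α)⁻¹ • u) p = Real.tan α ∧
      dist ((Real.cos β)⁻¹ • v) p = Real.tan β := by
  obtain ⟨hα0, hα2⟩ := hα
  obtain ⟨hβ0, hβ2⟩ := hβ
  have hπ : (0:ℝ) < π := Real.pi_pos
  set ca := Real.cos α with hcadef
  set cb := Real.cos β with hcbdef
  set sa := Real.sin α with hsadef
  set sb := Real.sin β with hsbdef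
  have hca : 0 < ca := Real.cos_pos_of_mem_Ioo ⟨by linarith, hα2⟩
  have hcb : 0 < cb := Real.cos_pos_of_mem_Ioo ⟨by linarith, hβ2⟩
  have hsa : 0 < sa := Real.sin_pos_of_pos_of_lt_pi hα0 (by linarith)
  have hsb : 0 < sb := Real.sin_pos_of_pos_of_lt_pi hβ0 (by linarith)
  have pa : sa^2 + ca^2 = 1 := Real.sin_sq_add_cos_sq α
  have pb : sb^2 + cb^2 = 1 := Real.sin_sq_add_cos_sq β
  -- inner product of u and v
  have habs : |⟪u, v⟫| ≤ 1 := by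
    have := abs_real_inner_le_norm u v
    rwa [hu, hv, one_mul] at this
  have huv : ⟪u, v⟫ = ca * cb - sa * sb := by
    have h1 : Real.cos (Real.arccos ⟪u, v⟫) = ⟪u, v⟫ :=
      Real.cos_arccos (by linarith [abs_le.mp habs]) (by linarith [abs_le.mp habs])
    rw [hangle, Real.cos_add] at h1
    linarith
  set A : EuclideanSpace ℝ (Fin 3) := ca⁻¹ • u with hAdef
  set B : EuclideanSpace ℝ (Fin 3) := cb⁻¹ • v with hBdef
  have hAA : ⟪A, A⟫ = ca⁻¹ * ca⁻¹ := by
    rw [hAdef, real_inner_smul_left, real_inner_smul_right,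
      real_inner_self_eq_norm_sq, hu]
    ring
  have hBB : ⟪B, B⟫ = cb⁻¹ * cb⁻¹ := by
    rw [hBdef, real_inner_smul_left, real_inner_smul_right,
      real_inner_self_eq_norm_sq, hv]
    ring
  have hAB : ⟪A, B⟫ = ca⁻¹ * cb⁻¹ * (ca * cb - sa * sb) := by
    rw [hAdef, hBdef, real_inner_smul_left, real_inner_smul_right, huv]
    ring
  set L : ℝ := sa/ca + sb/cb with hLdef
  have hL : 0 < L := by positivity
  set t0 : ℝ := (sa/ca) / L with ht0def
  have ht00 : 0 ≤ t0 := by positivity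
  have ht01 : t0 ≤ 1 := by
    rw [ht0def, div_le_one hL]
    have : 0 < sb/cb := by positivity
    linarith
  -- general expansion of the norm along the line
  have expand : ∀ s : ℝ, ‖A + s • (B - A)‖^2 = 1 + L^2 * (s - t0)^2 := by
    intro s
    have h1 : ‖A + s • (B - A)‖^2
        = ⟪A, A⟫ + 2*s*(⟪A, B⟫ - ⟪A, A⟫) + s^2*(⟪A, A⟫ - 2*⟪A, B⟫ + ⟪B, B⟫) := by
      rw [← real_inner_self_eq_norm_sq]
      simp only [inner_add_left, inner_add_right, real_inner_smul_left,
        real_inner_smul_right, inner_sub_left, inner_sub_right, real_inner_comm B A]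
      ring
    rw [h1, hAA, hAB, hBB]
    have := scal_key ca cb sa sb s hca hcb hsa hsb pa pb
    rw [hLdef, ht0def]
    linarith [this]
  have hlen : ‖B - A‖ = L := by
    have h1 : ‖B - A‖^2 = ⟪A, A⟫ - 2*⟪A, B⟫ + ⟪B, B⟫ := by
      rw [← real_inner_self_eq_norm_sq]
      simp only [inner_sub_left, inner_sub_right, real_inner_comm B A]
      ring
    have h2 : ‖B - A‖^2 = L^2 := by
      rw [h1, hAA, hAB, hBB, hLdef]
      linarith [scal_len ca cb sa sb hca hcb hsa hsb pa pb]
    exact eq_of_sq_eq_sq' _ _ (norm_nonneg _) hL.le h2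
  set p : EuclideanSpace ℝ (Fin 3) := A + t0 • (B - A) with hpdef
  have hpmem : p ∈ segment ℝ A B := by
    refine ⟨1 - t0, t0, by linarith, ht00, by ring, ?_⟩
    rw [hpdef]
    rw [sub_smul, one_smul, smul_sub]
    abel
  have hpnorm : ‖p‖ = 1 := by
    have h1 : ‖p‖^2 = 1 := by
      rw [hpdef, expand t0]; ring
    exact eq_of_sq_eq_sq' _ _ (norm_nonneg _) zero_le_one (by rw [h1]; ring)
  have htan_a : t0 * L = Real.tan α := by
    rw [Real.tan_eq_sin_div_cos, ht0def, div_mul_cancel₀ _ hL.ne']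
  have htan_b : (1 - t0) * L = Real.tan β := by
    rw [Real.tan_eq_sin_div_cos, ht0def, sub_mul, one_mul,
      div_mul_cancel₀ _ hL.ne', hLdef]
    ring
  refine ⟨p, hpmem, hpnorm, ?_, ?_, ?_⟩
  · rintro q ⟨a, b, ha, hb, hab, rfl⟩
    have hq : a • A + b • B = A + b • (B - A) := by
      have haa : a = 1 - b := by linarith
      rw [haa, sub_smul, one_smul, smul_sub]
      abel
    rw [hq]
    have hq2 := expand b
    constructor
    · nlinarith [norm_nonneg (A + b • (B - A)), sq_nonneg (L * (b - t0))]
    · intro hqe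
      rw [hqe] at hq2
      have hbt : b = t0 := by
        have : L^2 * (b - t0)^2 = 0 := by linarith
        have h3 : (b - t0)^2 = 0 := by
          rcases mul_eq_zero.mp this with h | h
          · exact absurd h (by positivity)
          · exact h
        have := pow_eq_zero_iff (n := 2) (by norm_num) |>.mp h3
        linarith [sub_eq_zero.mp this]
      rw [hbt, hpdef]
  · have : A - p = (-t0) • (B - A) := by
      rw [hpdef, neg_smul]
      abel
    rw [dist_eq_norm, this, norm_smul, hlen]
    rw [← htan_a]
    simp [abs_of_nonneg ht00]
  · have : B - p = (1 - t0) • (B - A) := by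
      rw [hpdef, sub_smul, one_smul, smul_sub]
      abel
    rw [dist_eq_norm, this, norm_smul, hlen, ← htan_b]
    rw [Real.norm_eq_abs, abs_of_nonneg (by linarith)]
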